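/- Let B be a Banach space, Â : B → B compact linear, A = I − Â, and K = ker(A^{n₀}), R = range(A^{n₀}) where ker(A^{n₀+1}) = ker(A^{n₀}). Then ker A ⊆ K, A(K) ⊆ K, A(R) ⊆ R, and the restriction of A to R is a bijection of R onto R. -/

import Mathlib

open Metric Filter Topology
set_option linter.unusedSectionVars false
set_option maxHeartbeats 1000000

section Aux

variable {B : Type*} [NormedAddCommGroup B] [NormedSpace ℂ B] [CompleteSpace B]

lemma aux_subseq (C : B →L[ℂ] B) (hC : IsCompactOperator C) (u : ℕ → B) (M : ℝ)
    (hu : ∀ n, ‖u n‖ ≤ M) :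
    ∃ v : B, ∃ φ : ℕ → ℕ, StrictMono φ ∧ Tendsto (fun n => C (u (φ n))) atTop (𝓝 v) := by
  have hb : Bornology.IsBounded (Set.range u) := by
    apply isBounded_iff_forall_norm_le.2 ⟨M, ?_⟩
    rintro x ⟨n, rfl⟩; exact hu n
  obtain ⟨K, hK, hKsub⟩ := hC.image_subset_compact_of_bounded (f := (C : B →ₗ[ℂ] B)) hb
  obtain ⟨v, -, φ, hφ, hconv⟩ := hK.tendsto_subseq (x := fun n => C (u n))
    (fun n => hKsub ⟨u n, ⟨n, rfl⟩, rfl⟩)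
  exact ⟨v, φ, hφ, hconv⟩

lemma aux_estimate (C : B →L[ℂ] B) (hC : IsCompactOperator C) :
    ∃ c : ℝ, ∀ x : B, infDist x (LinearMap.ker ((1 - C : B →L[ℂ] B) : B →ₗ[ℂ] B) : Set B) ≤ c * ‖(1 - C) x‖ := by
  set T : B →L[ℂ] B := 1 - C with hT
  set N : Set B := (LinearMap.ker (T : B →ₗ[ℂ] B) : Set B) with hN
  have hNne : N.Nonempty := ⟨0, by simp [hN]⟩
  by_contra h
  push_neg at h
  have h' : ∀ n : ℕ, ∃ x : B, ((n : ℝ) + 1) * ‖T x‖ < infDist x N := fun n => h ((n : ℝ) + 1)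
  choose x hx using h'
  set d : ℕ → ℝ := fun n => infDist (x n) N with hd
  have hdpos : ∀ n, 0 < d n := fun n =>
    lt_of_le_of_lt (by positivity) (hx n)
  have hyn : ∀ n, ∃ y ∈ N, dist (x n) y < 2 * d n := by
    intro n
    exact (infDist_lt_iff hNne).1 (by nlinarith [hdpos n])
  choose y hyN hyd using hyn
  set s : ℕ → ℝ := fun n => ‖x n - y n‖ with hs
  have hds : ∀ n, d n ≤ s n := by
    intro n
    have := infDist_le_dist_of_mem (x := x n) (hyN n)
    rwa [dist_eq_norm] at this
  have hspos : ∀ n, 0 < s n := fun n => lt_of_lt_of_le (hdpos n) (hds n)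
  set z : ℕ → B := fun n => (s n)⁻¹ • (x n - y n) with hz
  have hz1 : ∀ n, ‖z n‖ = 1 := by
    intro n
    rw [hz, norm_smul, norm_inv, Real.norm_of_nonneg (hspos n).le,
      inv_mul_cancel₀ (hspos n).ne']
  -- T (z n) is small
  have hTy : ∀ n, T (y n) = 0 := fun n => hyN n
  have hTz : ∀ n, ‖T (z n)‖ ≤ ((n : ℝ) + 1)⁻¹ := by
    intro n
    have h1 : T (z n) = (s n)⁻¹ • T (x n) := by
      rw [hz, T.map_smul_of_tower, map_sub, hTy n, sub_zero]
    rw [h1, norm_smul, norm_inv, Real.norm_of_nonneg (hspos n).le]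
    have key : ((n:ℝ) + 1) * ‖T (x n)‖ ≤ s n := (hx n).le.trans (hds n)
    rw [inv_mul_le_iff₀ (hspos n), ← div_eq_mul_inv, le_div_iff₀ (by positivity)]
    linarith [key]
  have hTz0 : Tendsto (fun n => T (z n)) atTop (𝓝 0) := by
    rw [tendsto_zero_iff_norm_tendsto_zero]
    refine squeeze_zero (fun n => norm_nonneg _) hTz ?_
    exact tendsto_one_div_add_atTop_nhds_zero_nat.congr (by intro n; rw [one_div])
  -- lower bound against the kernel
  have hlow : ∀ n, ∀ w ∈ N, (2 : ℝ)⁻¹ ≤ ‖z n - w‖ := by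
    intro n w hw
    have hmem : y n + s n • w ∈ N := by
      refine Submodule.add_mem _ (hyN n) (Submodule.smul_of_tower_mem _ _ hw)
    have h1 : z n - w = (s n)⁻¹ • (x n - (y n + s n • w)) := by
      simp only [hz]
      rw [smul_sub (s n)⁻¹ (x n) (y n + s n • w), smul_add, smul_smul,
        inv_mul_cancel₀ (hspos n).ne', one_smul, smul_sub]
      abel
    have h2 : d n ≤ ‖x n - (y n + s n • w)‖ := by
      have := infDist_le_dist_of_mem (x := x n) hmem
      rwa [dist_eq_norm] at this
    rw [h1, norm_smul, norm_inv, Real.norm_of_nonneg (hspos n).le]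
    rw [le_inv_mul_iff₀ (hspos n)]
    have := hyd n
    rw [dist_eq_norm] at this
    nlinarith
  -- extract convergent subsequence
  obtain ⟨v, φ, hφ, hconv⟩ := aux_subseq C hC z 1 (fun n => (hz1 n).le)
  have hzv : Tendsto (fun n => z (φ n)) atTop (𝓝 v) := by
    have hrw : ∀ n, z (φ n) = T (z (φ n)) + C (z (φ n)) := by
      intro n; simp [hT, ContinuousLinearMap.sub_apply]
    have : Tendsto (fun n => T (z (φ n)) + C (z (φ n))) atTop (𝓝 (0 + v)) :=
      (hTz0.comp hφ.tendsto_atTop).add hconv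
    rw [zero_add] at this
    exact this.congr (fun n => (hrw n).symm)
  have hvN : v ∈ N := by
    have h1 : Tendsto (fun n => T (z (φ n))) atTop (𝓝 (T v)) :=
      (T.continuous.tendsto v).comp hzv
    have h2 : Tendsto (fun n => T (z (φ n))) atTop (𝓝 0) := hTz0.comp hφ.tendsto_atTop
    have : T v = 0 := tendsto_nhds_unique h1 h2
    exact this
  have hsub : Tendsto (fun n => z (φ n) - v) atTop (𝓝 0) := by
    simpa using hzv.sub_const v
  have : Tendsto (fun n => ‖z (φ n) - v‖) atTop (𝓝 0) := by
    simpa using hsub.norm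
  obtain ⟨n, hn⟩ := (this.eventually (eventually_lt_nhds (show (0:ℝ) < 2⁻¹ by norm_num))).exists
  exact absurd (hlow (φ n) v hvN) (not_le.2 hn)

lemma aux_closedRange (C : B →L[ℂ] B) (hC : IsCompactOperator C) :
    IsClosed (LinearMap.range ((1 - C : B →L[ℂ] B) : B →ₗ[ℂ] B) : Set B) := by
  set T : B →L[ℂ] B := 1 - C with hT
  set N : Set B := (LinearMap.ker (T : B →ₗ[ℂ] B) : Set B) with hN
  have hNne : N.Nonempty := ⟨0, by simp [hN]⟩
  obtain ⟨c, hc⟩ := aux_estimate C hC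
  rw [← isSeqClosed_iff_isClosed]
  intro u yl hu huy
  choose x hx using hu
  -- u is bounded
  obtain ⟨M, hM⟩ := isBounded_iff_forall_norm_le.1 huy.cauchySeq.isBounded_range
  have hMu : ∀ n, ‖u n‖ ≤ M := fun n => hM _ ⟨n, rfl⟩
  set D : ℝ := |c| * M + 1 with hD
  have hdn : ∀ n, infDist (x n) N < D := by
    intro n
    calc infDist (x n) N ≤ c * ‖T (x n)‖ := hc (x n)
      _ ≤ |c| * M := by
          calc c * ‖T (x n)‖ ≤ |c| * ‖T (x n)‖ :=
                mul_le_mul_of_nonneg_right (le_abs_self c) (norm_nonneg _)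
            _ ≤ |c| * M := by
                apply mul_le_mul_of_nonneg_left _ (abs_nonneg c)
                rw [show T (x n) = u n from hx n]; exact hMu n
      _ < D := by rw [hD]; linarith
  have hwn : ∀ n, ∃ w ∈ N, dist (x n) w < D := fun n => (infDist_lt_iff hNne).1 (hdn n)
  choose w hwN hwd using hwn
  set g : ℕ → B := fun n => x n - w n with hg
  have hTg : ∀ n, T (g n) = u n := by
    intro n
    rw [hg, map_sub, show T (w n) = 0 from hwN n, sub_zero, show T (x n) = u n from hx n]
  have hgb : ∀ n, ‖g n‖ ≤ D := by
    intro n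
    rw [hg, ← dist_eq_norm]
    exact (hwd n).le
  obtain ⟨v, φ, hφ, hconv⟩ := aux_subseq C hC g D hgb
  have hgv : Tendsto (fun n => g (φ n)) atTop (𝓝 (yl + v)) := by
    have hrw : ∀ n, g (φ n) = T (g (φ n)) + C (g (φ n)) := by
      intro n; simp [hT, ContinuousLinearMap.sub_apply]
    have h1 : Tendsto (fun n => T (g (φ n))) atTop (𝓝 yl) := by
      refine (huy.comp hφ.tendsto_atTop).congr (fun n => (hTg (φ n)).symm)
    have : Tendsto (fun n => T (g (φ n)) + C (g (φ n))) atTop (𝓝 (yl + v)) := h1.add hconv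
    exact this.congr (fun n => (hrw n).symm)
  refine ⟨yl + v, ?_⟩
  have h1 : Tendsto (fun n => T (g (φ n))) atTop (𝓝 (T (yl + v))) :=
    (T.continuous.tendsto _).comp hgv
  have h2 : Tendsto (fun n => T (g (φ n))) atTop (𝓝 yl) :=
    (huy.comp hφ.tendsto_atTop).congr (fun n => (hTg (φ n)).symm)
  exact tendsto_nhds_unique h1 h2

lemma aux_riesz (F G : Submodule ℂ B) (hFG : F ≤ G) (hFc : IsClosed (F : Set B))
    (hne : F ≠ G) :
    ∃ x : B, x ∈ G ∧ ‖x‖ = 1 ∧ ∀ y ∈ F, (2 : ℝ)⁻¹ ≤ ‖x - y‖ := by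
  set F' : Submodule ℂ G := F.comap G.subtype with hF'
  have hF'c : IsClosed (F' : Set G) := hFc.preimage continuous_subtype_val
  obtain ⟨g, hgG, hgF⟩ := SetLike.exists_of_lt (hFG.lt_of_ne hne)
  have hex : ∃ x : G, x ∉ F' := ⟨⟨g, hgG⟩, by simpa [hF'] using hgF⟩
  obtain ⟨x₀, hx₀F, hx₀⟩ := riesz_lemma hF'c hex (show (2:ℝ)⁻¹ < 1 by norm_num)
  have hx₀ne : (x₀ : B) ≠ 0 := by
    intro h
    exact hx₀F (by simpa [hF'] using (show x₀ = 0 from Subtype.ext h) ▸ F'.zero_mem)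
  set r : ℝ := ‖(x₀ : B)‖ with hr
  have hrpos : 0 < r := norm_pos_iff.2 hx₀ne
  refine ⟨r⁻¹ • (x₀ : B), Submodule.smul_of_tower_mem G _ x₀.2, ?_, ?_⟩
  · rw [norm_smul, norm_inv, Real.norm_of_nonneg hrpos.le, inv_mul_cancel₀ hrpos.ne']
  · intro y hy
    have hmem : r • y ∈ F := Submodule.smul_of_tower_mem F _ hy
    have heq : r⁻¹ • (x₀ : B) - y = r⁻¹ • ((x₀ : B) - r • y) := by
      rw [smul_sub, smul_smul, inv_mul_cancel₀ hrpos.ne', one_smul]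
    set yG : G := ⟨r • y, hFG hmem⟩ with hyG
    have hyF' : yG ∈ F' := by simpa [hF', hyG] using hmem
    have hlow := hx₀ yG hyF'
    have hco : ‖x₀ - yG‖ = ‖(x₀ : B) - r • y‖ := by
      rw [Submodule.coe_norm]; rfl
    rw [heq, norm_smul, norm_inv, Real.norm_of_nonneg hrpos.le]
    rw [hco] at hlow
    rw [Submodule.coe_norm] at hlow
    calc (2:ℝ)⁻¹ = r⁻¹ * (2⁻¹ * r) := by field_simp
      _ ≤ r⁻¹ * ‖(x₀ : B) - r • y‖ := by
          exact mul_le_mul_of_nonneg_left hlow (by positivity)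

lemma aux_compact_pow (Ahat : B →L[ℂ] B) (hAhat : IsCompactOperator Ahat) (n : ℕ) :
    IsCompactOperator ⇑((1 : B →L[ℂ] B) - (1 - Ahat) ^ n) := by
  induction n with
  | zero =>
    have h0 : ((1 : B →L[ℂ] B) - (1 - Ahat) ^ 0) = 0 := by simp
    rw [h0]
    exact isCompactOperator_zero
  | succ n IH =>
    have h1 := IH.add (hAhat.clm_comp ((1 - Ahat) ^ n))
    have heq : ⇑((1 : B →L[ℂ] B) - (1 - Ahat) ^ (n + 1)) =
        ⇑((1 : B →L[ℂ] B) - (1 - Ahat) ^ n) + (⇑((1 - Ahat) ^ n) ∘ ⇑Ahat) := by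
      funext x
      simp only [Pi.add_apply, Function.comp_apply, ContinuousLinearMap.sub_apply,
        ContinuousLinearMap.one_apply, pow_succ, ContinuousLinearMap.mul_apply, map_sub]
      abel
    exact heq ▸ h1

end Aux

/-- With `A = I - Â`, `Â` compact, `K = ker (A^{n₀})`, `R = range (A^{n₀})` and
`ker (A^{n₀+1}) = ker (A^{n₀})`: `ker A ⊆ K`, `A(K) ⊆ K`, `A(R) ⊆ R`, and
`A` restricted to `R` is a bijection of `R` onto `R`. -/
theorem stmt3 (B : Type*) [NormedAddCommGroup B] [NormedSpace ℂ B] [CompleteSpace B]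
    (Ahat : B →L[ℂ] B) (hAhat : IsCompactOperator Ahat) (n₀ : ℕ) (hn₀ : 0 < n₀)
    (hstab : LinearMap.ker (((1 - Ahat) ^ (n₀ + 1) : B →L[ℂ] B) : B →ₗ[ℂ] B) = LinearMap.ker (((1 - Ahat) ^ n₀ : B →L[ℂ] B) : B →ₗ[ℂ] B)) :
    LinearMap.ker ((1 - Ahat : B →L[ℂ] B) : B →ₗ[ℂ] B) ≤ LinearMap.ker (((1 - Ahat) ^ n₀ : B →L[ℂ] B) : B →ₗ[ℂ] B) ∧
    Submodule.map ((1 - Ahat : B →L[ℂ] B) : B →ₗ[ℂ] B) (LinearMap.ker (((1 - Ahat) ^ n₀ : B →L[ℂ] B) : B →ₗ[ℂ] B)) ≤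
      LinearMap.ker (((1 - Ahat) ^ n₀ : B →L[ℂ] B) : B →ₗ[ℂ] B) ∧
    Submodule.map ((1 - Ahat : B →L[ℂ] B) : B →ₗ[ℂ] B) (LinearMap.range (((1 - Ahat) ^ n₀ : B →L[ℂ] B) : B →ₗ[ℂ] B)) =
      LinearMap.range (((1 - Ahat) ^ n₀ : B →L[ℂ] B) : B →ₗ[ℂ] B) ∧
    Set.InjOn (⇑(1 - Ahat : B →L[ℂ] B)) (LinearMap.range (((1 - Ahat) ^ n₀ : B →L[ℂ] B) : B →ₗ[ℂ] B) : Set B) := by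
  set A : B →L[ℂ] B := 1 - Ahat with hA
  set R : ℕ → Submodule ℂ B := fun n => LinearMap.range ((A ^ n : B →L[ℂ] B) : B →ₗ[ℂ] B) with hR
  have happ : ∀ (a b : ℕ) (x : B), (A ^ (a + b)) x = (A ^ a) ((A ^ b) x) := by
    intro a b x; rw [pow_add, ContinuousLinearMap.mul_apply]
  have happ1 : ∀ (a : ℕ) (x : B), (A ^ (a + 1)) x = (A ^ a) (A x) := by
    intro a x; rw [pow_succ, ContinuousLinearMap.mul_apply]
  have happ1' : ∀ (a : ℕ) (x : B), (A ^ (a + 1)) x = A ((A ^ a) x) := by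
    intro a x; rw [pow_succ', ContinuousLinearMap.mul_apply]
  -- R (k+1) = map A (R k)
  have f1 : ∀ k, R (k + 1) = Submodule.map (A : B →ₗ[ℂ] B) (R k) := by
    intro k
    ext x
    simp only [hR, LinearMap.mem_range, Submodule.mem_map]
    constructor
    · rintro ⟨z, rfl⟩
      exact ⟨(A ^ k) z, ⟨z, rfl⟩, (happ1' k z).symm⟩
    · rintro ⟨y, ⟨z, rfl⟩, rfl⟩
      exact ⟨z, happ1' k z⟩
  -- R decreasing
  have f2 : ∀ k, R (k + 1) ≤ R k := by
    intro k x hx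
    obtain ⟨z, rfl⟩ := hx
    exact ⟨A z, (happ1 k z).symm⟩
  have f2' : ∀ ⦃a b : ℕ⦄, a ≤ b → R b ≤ R a := fun a b h => antitone_nat_of_succ_le f2 h
  -- R k closed
  have f3 : ∀ k, IsClosed ((R k : Set B)) := by
    intro k
    have hC : IsCompactOperator ⇑((1 : B →L[ℂ] B) - A ^ k) := aux_compact_pow Ahat hAhat k
    have := aux_closedRange _ hC
    rwa [sub_sub_cancel] at this
  -- kernels stabilize
  have fker : ∀ j, LinearMap.ker ((A ^ (n₀ + j) : B →L[ℂ] B) : B →ₗ[ℂ] B) = LinearMap.ker ((A ^ n₀ : B →L[ℂ] B) : B →ₗ[ℂ] B) := by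
    intro j
    induction j with
    | zero => rfl
    | succ j IH =>
      ext x
      simp only [LinearMap.mem_ker]
      constructor
      · intro hx
        have h1 : (A ^ (n₀ + 1)) ((A ^ j) x) = 0 := by
          rw [← happ (n₀ + 1) j, show n₀ + 1 + j = n₀ + (j + 1) from by omega, show (A ^ (n₀ + (j + 1))) x = 0 from hx]
        have h2 : (A ^ j) x ∈ LinearMap.ker ((A ^ (n₀ + 1) : B →L[ℂ] B) : B →ₗ[ℂ] B) := h1
        rw [hstab] at h2
        have h3 : (A ^ (n₀ + j)) x = 0 := by
          rw [happ n₀ j]; exact h2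
        have h4 : x ∈ LinearMap.ker ((A ^ (n₀ + j) : B →L[ℂ] B) : B →ₗ[ℂ] B) := h3
        rw [IH] at h4
        exact h4
      · intro hx
        show (A ^ (n₀ + (j + 1))) x = 0
        rw [show n₀ + (j + 1) = (j + 1) + n₀ from by omega, happ (j + 1) n₀, show (A ^ n₀) x = 0 from hx, map_zero]
  -- descent: some range equality
  have f5 : ∃ m, R (m + 1) = R m := by
    by_contra hcon
    push_neg at hcon
    have hx : ∀ n, ∃ x : B, x ∈ R n ∧ ‖x‖ = 1 ∧ ∀ y ∈ R (n + 1), (2 : ℝ)⁻¹ ≤ ‖x - y‖ := by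
      intro n
      obtain ⟨x, hxG, hx1, hxlow⟩ := aux_riesz (R (n + 1)) (R n) (f2 n) (f3 (n + 1))
        (hcon n)
      exact ⟨x, hxG, hx1, hxlow⟩
    choose x hxR hx1 hxlow using hx
    obtain ⟨v, φ, hφ, hconv⟩ := aux_subseq Ahat hAhat x 1 (fun n => (hx1 n).le)
    obtain ⟨N, hN⟩ := Metric.cauchySeq_iff.1 hconv.cauchySeq (2 : ℝ)⁻¹ (by norm_num)
    have hd := hN N le_rfl (N + 1) (Nat.le_succ N)
    set a : ℕ := φ N with ha
    set b : ℕ := φ (N + 1) with hb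
    have hab : a + 1 ≤ b := hφ (Nat.lt_succ_self N)
    have hy : A (x a) + x b - A (x b) ∈ R (a + 1) := by
      have h1 : A (x a) ∈ R (a + 1) := by
        rw [f1 a]; exact ⟨x a, hxR a, rfl⟩
      have h2 : x b ∈ R (a + 1) := f2' hab (hxR b)
      have h3 : A (x b) ∈ R (a + 1) := by
        have : A (x b) ∈ R (b + 1) := by rw [f1 b]; exact ⟨x b, hxR b, rfl⟩
        exact f2' (by omega) this
      exact Submodule.sub_mem _ (Submodule.add_mem _ h1 h2) h3
    have hlow := hxlow a _ hy
    have heq : x a - (A (x a) + x b - A (x b)) = Ahat (x a) - Ahat (x b) := by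
      have hz : ∀ z : B, Ahat z = z - A z := by
        intro z
        simp [hA, ContinuousLinearMap.sub_apply]
      rw [hz (x a), hz (x b)]
      abel
    rw [heq] at hlow
    rw [dist_eq_norm] at hd
    exact absurd hlow (not_le.2 hd)
  obtain ⟨m, hm⟩ := f5
  -- ranges stabilize above m
  have f6 : ∀ j, R (m + j) = R m := by
    intro j
    induction j with
    | zero => rfl
    | succ j IH =>
      rw [show m + (j + 1) = (m + j) + 1 from rfl, f1, IH, ← f1, hm]
  -- main range equality
  have fmain : R (n₀ + 1) = R n₀ := by
    refine le_antisymm (f2 n₀) ?_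
    set M : ℕ := m + n₀ with hM
    set t : ℕ := m + 1 with ht
    have hMt : n₀ + t = M + 1 := by omega
    have hRM1 : R (M + 1) = R m := by
      rw [show M + 1 = m + (n₀ + 1) from by omega]; exact f6 (n₀ + 1)
    intro y hy
    obtain ⟨u₀, hu₀⟩ := hy
    -- A^t y ∈ R (M+1+t)
    have hAty : (A ^ t) y ∈ R (n₀ + t) := by
      refine ⟨u₀, ?_⟩
      show (A ^ (n₀ + t)) u₀ = (A ^ t) y
      rw [show n₀ + t = t + n₀ from by omega, happ t n₀, show (A ^ n₀) u₀ = y from hu₀]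
    have e1 : R (n₀ + t) = R m := by rw [hMt, hRM1]
    have e2 : R (M + 1 + t) = R m := by
      rw [show M + 1 + t = m + (n₀ + 1 + t) from by omega]
      exact f6 (n₀ + 1 + t)
    have h1 : (A ^ t) y ∈ R (M + 1 + t) := by
      rw [e2, ← e1]; exact hAty
    obtain ⟨w', hw'⟩ := h1
    set w : B := (A ^ (M + 1)) w' with hw
    have hwR : w ∈ R (M + 1) := ⟨w', rfl⟩
    have hAtw : (A ^ t) w = (A ^ t) y := by
      rw [hw, ← happ, show t + (M + 1) = M + 1 + t from by omega, show (A ^ (M + 1 + t)) w' = (A ^ t) y from hw']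
    -- y - w ∈ R n₀
    have hywR : y - w ∈ R n₀ := by
      refine Submodule.sub_mem _ ⟨u₀, hu₀⟩ (f2' (by omega) hwR)
    obtain ⟨u, hu⟩ := hywR
    have hu0 : (A ^ (n₀ + t)) u = 0 := by
      rw [show n₀ + t = t + n₀ from by omega, happ, show (A ^ n₀) u = y - w from hu, map_sub, hAtw, sub_self]
    have humem : u ∈ LinearMap.ker ((A ^ (n₀ + t) : B →L[ℂ] B) : B →ₗ[ℂ] B) := hu0
    rw [fker t] at humem
    have hyw : y - w = 0 := by
      rw [← hu]
      exact humem
    have : y = w := by rwa [sub_eq_zero] at hyw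
    rw [this]
    exact f2' (by omega) hwR
  -- assemble the four goals
  refine ⟨?_, ?_, ?_, ?_⟩
  · intro x hx
    have hx0 : A x = 0 := hx
    obtain ⟨k, rfl⟩ : ∃ k, n₀ = k + 1 := ⟨n₀ - 1, by omega⟩
    show (A ^ (k + 1)) x = 0
    rw [happ1, hx0, map_zero]
  · rintro x ⟨z, hz, rfl⟩
    have hz0 : (A ^ n₀) z = 0 := hz
    show (A ^ n₀) (A z) = 0
    rw [← happ1, happ1', hz0, map_zero]
  · rw [← f1 n₀]
    exact fmain
  · intro p hp q hq hpq
    have hsub : p - q ∈ R n₀ := Submodule.sub_mem _ hp hq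
    obtain ⟨u, hu⟩ := hsub
    have h0 : A (p - q) = 0 := by rw [map_sub, hpq, sub_self]
    have h1 : (A ^ (n₀ + 1)) u = 0 := by
      rw [happ1', show (A ^ n₀) u = p - q from hu, h0]
    have h2 : u ∈ LinearMap.ker ((A ^ (n₀ + 1) : B →L[ℂ] B) : B →ₗ[ℂ] B) := h1
    rw [hstab] at h2
    have h3 : p - q = 0 := by rw [← hu]; exact h2
    rwa [sub_eq_zero] at h3
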